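/- Let p be a prime, F a field of characteristic p, δ : F → F a derivation, and t ∈ F with δ(t) ≠ 0. Suppose D : 𝔽_p(t) → F is an additive map that can be written as D = c₁δ + c₂δ² + … + c_{p−2}δ^{p−2} on 𝔽_p(t) with coefficients c_i ∈ F. Then ∑_{l=0}^{p−2} D(t^{p−1−l}) · t^l = 0. -/

import Mathlib

open Finset

section Aux

variable {F : Type*} [Field F] (δ : F → F)

lemma aux16_zero (hadd : ∀ a b : F, δ (a + b) = δ a + δ b) : δ 0 = 0 := by
  have h := hadd 0 0
  rw [add_zero] at h
  exact (left_eq_add.mp h)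

lemma aux16_one (hmul : ∀ a b : F, δ (a * b) = δ a * b + a * δ b) : δ 1 = 0 := by
  have h := hmul 1 1
  rw [mul_one, one_mul, mul_one] at h
  exact (left_eq_add.mp h)

lemma aux16_nat (hadd : ∀ a b : F, δ (a + b) = δ a + δ b)
    (hmul : ∀ a b : F, δ (a * b) = δ a * b + a * δ b) (m : ℕ) : δ (m : F) = 0 := by
  induction m with
  | zero => simpa using aux16_zero δ hadd
  | succ m ih =>
      push_cast
      rw [hadd, ih, aux16_one δ hmul, add_zero]

lemma aux16_pow (hadd : ∀ a b : F, δ (a + b) = δ a + δ b)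
    (hmul : ∀ a b : F, δ (a * b) = δ a * b + a * δ b) (t : F) (n : ℕ) :
    δ (t ^ n) = (n : F) * t ^ (n - 1) * δ t := by
  induction n with
  | zero => simp [aux16_one δ hmul]
  | succ n ih =>
      rw [pow_succ, hmul, ih]
      cases n with
      | zero => simp
      | succ m =>
          have h1 : (m + 1) - 1 = m := rfl
          have h2 : (m + 1 + 1) - 1 = m + 1 := rfl
          rw [h1, h2]
          push_cast
          rw [pow_succ]
          ring

lemma aux16_key (hadd : ∀ a b : F, δ (a + b) = δ a + δ b)
    (hmul : ∀ a b : F, δ (a * b) = δ a * b + a * δ b) (t : F) (i : ℕ) :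
    ∃ a : ℕ → F, (∀ j, ¬(1 ≤ j ∧ j ≤ i + 1) → a j = 0) ∧
      ∀ n : ℕ, δ^[i+1] (t ^ n) =
        ∑ j ∈ range (i + 2), a j * (n.descFactorial j : F) * t ^ (n - j) := by
  induction i with
  | zero =>
      refine ⟨fun j => if j = 1 then δ t else 0, ?_, ?_⟩
      · intro j hj
        have : j ≠ 1 := by omega
        simp [this]
      · intro n
        rw [Function.iterate_one, aux16_pow δ hadd hmul t n]
        rw [show (2 : ℕ) = 0 + 1 + 1 by rfl, Finset.sum_range_succ, Finset.sum_range_succ,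
          Finset.sum_range_zero]
        simp [Nat.descFactorial_one]
        ring
  | succ i ih =>
      obtain ⟨a, ha0, ha⟩ := ih
      refine ⟨fun j => δ (a j) + a (j - 1) * δ t, ?_, ?_⟩
      · intro j hj
        have h1 : a j = 0 := ha0 j (by omega)
        have h2 : a (j - 1) = 0 := ha0 (j - 1) (by omega)
        simp [h1, h2, aux16_zero δ hadd]
      · intro n
        rw [Function.iterate_succ_apply', ha n]
        have hsum : δ (∑ j ∈ range (i + 2), a j * (n.descFactorial j : F) * t ^ (n - j))
            = ∑ j ∈ range (i + 2), δ (a j * (n.descFactorial j : F) * t ^ (n - j)) :=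
          map_sum (AddMonoidHom.mk' δ hadd) _ _
        rw [hsum]
        have hterm : ∀ j ∈ range (i + 2),
            δ (a j * (n.descFactorial j : F) * t ^ (n - j))
            = δ (a j) * (n.descFactorial j : F) * t ^ (n - j)
              + (a j * δ t) * (n.descFactorial (j + 1) : F) * t ^ (n - (j + 1)) := by
          intro j _
          rw [hmul, hmul, aux16_nat δ hadd hmul, aux16_pow δ hadd hmul]
          have hd : (n.descFactorial (j + 1) : F)
              = (n.descFactorial j : F) * ((n - j : ℕ) : F) := by
            rw [Nat.descFactorial_succ]
            push_cast
            ring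
          have he : (n - j) - 1 = n - (j + 1) := by omega
          rw [hd, he]
          ring
        rw [Finset.sum_congr rfl hterm, Finset.sum_add_distrib]
        have hrhs : ∀ j ∈ range (i + 3),
            (δ (a j) + a (j - 1) * δ t) * (n.descFactorial j : F) * t ^ (n - j)
            = δ (a j) * (n.descFactorial j : F) * t ^ (n - j)
              + (a (j - 1) * δ t) * (n.descFactorial j : F) * t ^ (n - j) := by
          intro j _; ring
        rw [Finset.sum_congr rfl hrhs, Finset.sum_add_distrib]
        congr 1
        · rw [show i + 3 = (i + 2) + 1 from rfl,
            Finset.sum_range_succ (fun j => δ (a j) * (n.descFactorial j : F) * t ^ (n - j))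
              (i + 2),
            ha0 (i + 2) (by omega), aux16_zero δ hadd, zero_mul, zero_mul, add_zero]
        · rw [show i + 3 = (i + 2) + 1 from rfl,
            Finset.sum_range_succ'
              (fun j => a (j - 1) * δ t * (n.descFactorial j : F) * t ^ (n - j)) (i + 2)]
          have h0 : a (0 - 1) = 0 := ha0 0 (by omega)
          simp only [h0, Nat.add_sub_cancel, zero_mul, add_zero]

lemma aux16_vanish {p : ℕ} [Fact p.Prime] [CharP F p]
    (hadd : ∀ a b : F, δ (a + b) = δ a + δ b)
    (hmul : ∀ a b : F, δ (a * b) = δ a * b + a * δ b) (t : F)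
    (i : ℕ) (hi1 : 1 ≤ i) (hi2 : i ≤ p - 2) :
    ∑ l ∈ range (p - 1), δ^[i] (t ^ (p - 1 - l)) * t ^ l = 0 := by
  have hp : p.Prime := Fact.out
  have hp2 : 2 ≤ p := hp.two_le
  obtain ⟨i', rfl⟩ : ∃ i', i = i' + 1 := ⟨i - 1, by omega⟩
  obtain ⟨a, ha0, ha⟩ := aux16_key δ hadd hmul t i'
  calc ∑ l ∈ range (p - 1), δ^[i'+1] (t ^ (p - 1 - l)) * t ^ l
      = ∑ l ∈ range (p - 1), ∑ j ∈ range (i' + 2),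
          a j * ((p - 1 - l).descFactorial j : F) * t ^ ((p - 1 - l) - j) * t ^ l := by
        refine Finset.sum_congr rfl fun l _ => ?_
        rw [ha, Finset.sum_mul]
    _ = ∑ j ∈ range (i' + 2), ∑ l ∈ range (p - 1),
          a j * ((p - 1 - l).descFactorial j : F) * t ^ ((p - 1 - l) - j) * t ^ l :=
        Finset.sum_comm
    _ = 0 := by
        refine Finset.sum_eq_zero fun j hj => ?_
        by_cases hja : 1 ≤ j ∧ j ≤ i' + 1
        · -- 1 ≤ j ≤ p - 2
          have hjp : j ≤ p - 2 := le_trans hja.2 hi2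
          have hterm : ∀ l ∈ range (p - 1),
              a j * ((p - 1 - l).descFactorial j : F) * t ^ ((p - 1 - l) - j) * t ^ l
              = ((p - 1 - l).descFactorial j : F) * (a j * t ^ (p - 1 - j)) := by
            intro l hl
            rw [Finset.mem_range] at hl
            rcases le_or_gt j (p - 1 - l) with h | h
            · rw [mul_assoc, ← pow_add, show (p - 1 - l) - j + l = p - 1 - j by omega]
              ring
            · rw [Nat.descFactorial_eq_zero_iff_lt.mpr h]
              simp
          rw [Finset.sum_congr rfl hterm, ← Finset.sum_mul, ← Nat.cast_sum]
          have hNsum : ∑ l ∈ range (p - 1), (p - 1 - l).descFactorial j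
              = ∑ n ∈ range p, n.descFactorial j := by
            conv_rhs => rw [show p = (p - 1) + 1 by omega, Finset.sum_range_succ']
            rw [Nat.descFactorial_eq_zero_iff_lt.mpr (by omega), add_zero]
            rw [← Finset.sum_range_reflect (fun l => (l + 1).descFactorial j) (p - 1)]
            refine Finset.sum_congr rfl fun l hl => ?_
            rw [Finset.mem_range] at hl
            congr 1
            omega
          have hdvd : p ∣ ∑ n ∈ range p, n.descFactorial j := by
            have h1 : ∑ n ∈ range p, n.descFactorial j
                = (Nat.factorial j) * ∑ n ∈ range p, n.choose j := by
              rw [Finset.mul_sum]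
              exact Finset.sum_congr rfl fun n _ =>
                Nat.descFactorial_eq_factorial_mul_choose n j
            have hsub : Icc j (p - 1) ⊆ range p := by
              intro x hx
              rw [Finset.mem_Icc] at hx
              rw [Finset.mem_range]
              omega
            have h2 : ∑ n ∈ range p, n.choose j = p.choose (j + 1) := by
              rw [← Finset.sum_subset hsub (fun x _ hnx => Nat.choose_eq_zero_of_lt (by
                rw [Finset.mem_Icc] at hnx
                rw [Finset.mem_range] at *
                omega))]
              rw [Nat.sum_Icc_choose, show p - 1 + 1 = p by omega]
            rw [h1, h2]
            exact Dvd.dvd.mul_left (hp.dvd_choose_self (by omega) (by omega)) _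
          rw [hNsum, (CharP.cast_eq_zero_iff F p _).mpr hdvd, zero_mul]
        · rw [ha0 j hja]
          simp

end Aux

/-- If D is an F-linear combination of δ, δ², …, δ^{p-2} on 𝔽_p(t), then
∑_{l=0}^{p-2} D(t^{p-1-l})·t^l = 0. -/
theorem stmt_16 {F : Type*} [Field F] (p : ℕ) [Fact p.Prime] [CharP F p]
    (δ : F → F)
    (hadd : ∀ a b : F, δ (a + b) = δ a + δ b)
    (hmul : ∀ a b : F, δ (a * b) = δ a * b + a * δ b)
    (t : F) (ht : δ t ≠ 0)
    (Dm : F → F) (hDadd : ∀ a b : F, Dm (a + b) = Dm a + Dm b)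
    (c : ℕ → F)
    (hD : ∀ x ∈ Subfield.closure {t},
        Dm x = ∑ i ∈ Finset.Icc 1 (p - 2), c i * δ^[i] x) :
    ∑ l ∈ Finset.range (p - 1), Dm (t ^ (p - 1 - l)) * t ^ l = 0 := by
  have htmem : t ∈ Subfield.closure ({t} : Set F) :=
    Subfield.subset_closure (Set.mem_singleton t)
  have hmem : ∀ k : ℕ, t ^ k ∈ Subfield.closure ({t} : Set F) := by
    intro k
    exact pow_mem htmem k
  calc ∑ l ∈ Finset.range (p - 1), Dm (t ^ (p - 1 - l)) * t ^ l
      = ∑ l ∈ Finset.range (p - 1), ∑ i ∈ Finset.Icc 1 (p - 2),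
          c i * δ^[i] (t ^ (p - 1 - l)) * t ^ l := by
        refine Finset.sum_congr rfl fun l _ => ?_
        rw [hD _ (hmem _), Finset.sum_mul]
    _ = ∑ i ∈ Finset.Icc 1 (p - 2), ∑ l ∈ Finset.range (p - 1),
          c i * δ^[i] (t ^ (p - 1 - l)) * t ^ l := Finset.sum_comm
    _ = 0 := by
        refine Finset.sum_eq_zero fun i hi => ?_
        rw [Finset.mem_Icc] at hi
        have hv := aux16_vanish δ hadd hmul t i hi.1 hi.2 (p := p)
        calc ∑ l ∈ Finset.range (p - 1), c i * δ^[i] (t ^ (p - 1 - l)) * t ^ l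
            = c i * ∑ l ∈ Finset.range (p - 1), δ^[i] (t ^ (p - 1 - l)) * t ^ l := by
              rw [Finset.mul_sum]
              exact Finset.sum_congr rfl fun l _ => by ring
          _ = 0 := by rw [hv, mul_zero]
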